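/- Let S be a semigroup satisfying the identity x·y·z·x·y = x·y for all x, y, z ∈ S, and suppose that for all x, y, z, u, w ∈ S, x·y·z = x·y·w·z or x·y·z = x·u·y·z. Then for all x, y, s, t, u ∈ S, s·u·y·t = s·y·t or x·y = x·y·y. -/
import Mathlib


theorem stmt_8 {S : Type*} [Semigroup S]
    (hGRB : ∀ x y z : S, x * y * z * x * y = x * y)
    (hI : ∀ x y z u w : S, x * y * z = x * y * w * z ∨ x * y * z = x * u * y * z) :
    ∀ x y s t u : S, s * u * y * t = s * y * t ∨ x * y = x * y * y := by
  -- middle-duplication: a*b*c = a*b*b*c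
  have N : ∀ a b c : S, a * b * c = a * b * b * c := by
    intro a b c
    rcases hI a b c b b with h | h <;> exact h
  -- idempotency of products
  have idem : ∀ a b : S, a * b * (a * b) = a * b := by
    intro a b
    have h1 : a * b * (a * b) = a * b * b * (a * b) := by
      rcases hI a b (a * b) b b with h | h <;> exact h
    calc a * b * (a * b) = a * b * b * (a * b) := h1
      _ = a * b * b * a * b := (mul_assoc (a * b * b) a b).symm
      _ = a * b := hGRB a b b
  intro x y s t u
  by_cases h2 : x * y = x * y * y
  · exact Or.inr h2
  -- flat idempotency
  have idemf : x * y * x * y = x * y := by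
    have := idem x y
    simpa only [← mul_assoc] using this
  -- hK : x*y*y = x*s*y*y
  have hK : x * y * y = x * s * y * y := by
    rcases hI x y y s x with h | h
    · exact absurd (idemf.symm.trans h.symm) h2
    · exact h
  rcases hI s y y u (y * x) with h | h
  · -- h : s*y*y = s*y*(y*x)*y ; derive x*y = x*y*y, contradiction
    exfalso
    apply h2
    simp only [← mul_assoc] at h
    -- h : s*y*y = s*y*y*x*y
    have h' : s * y * y * x * y = s * y * y := h.symm
    have step2 : x * y * x * y = x * y * y * x * y := by
      have := N x y (x * y)
      simpa only [← mul_assoc] using this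
    have step3 : x * y * y * x * y = x * s * y * y * x * y := by
      rw [hK]
    have step4 : x * s * y * y * x * y = x * s * y * y := by
      have := congrArg (fun r => x * r) h'
      simpa only [← mul_assoc] using this
    calc x * y = x * y * x * y := idemf.symm
      _ = x * y * y * x * y := step2
      _ = x * s * y * y * x * y := step3
      _ = x * s * y * y := step4
      _ = x * y * y := hK.symm
  · -- h : s*y*y = s*u*y*y ; derive left disjunct
    left
    have n1 : s * u * y * t = s * u * y * y * t := by
      have := N (s * u) y t
      simpa only [← mul_assoc] using this
    have n2 : s * u * y * y * t = s * y * y * t := by rw [← h]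
    have n3 : s * y * y * t = s * y * t := (N s y t).symm
    exact n1.trans (n2.trans n3)
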